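/- For every nondecreasing, unbounded, total, computable function g : ℕ → ℕ, there exists a g(n)-to-one, total, commutative, associative, computable function σ : Σ* × Σ* → Σ*. That is, there is a computable σ : Σ* × Σ* → Σ* such that: (i) (x σ y) σ z = x σ (y σ z) for all x, y, z; (ii) x σ y = y σ x for all x, y; and (iii) for every y ∈ Σ* in the image of σ, the set {(x₁,x₂) ∈ Σ* × Σ* | σ(x₁,x₂) = y} is finite and has at most g(|y|) elements. -/

import Mathlib

namespace Stmt3Aux

variable (g : ℕ → ℕ) (hunb : ∀ N : ℕ, ∃ n : ℕ, g n > N)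

/-- padding length: least `L` with `g L > 4n+3`, i.e. `g L ≥ 4n+4`. -/
def Dfun (n : ℕ) : ℕ := Nat.find (hunb (4 * n + 3))

lemma Dfun_spec (n : ℕ) : 4 * n + 4 ≤ g (Dfun g hunb n) :=
  Nat.find_spec (hunb (4 * n + 3))

/-- the canonical representative of `n`. -/
def Ffun (n : ℕ) : List Bool :=
  List.replicate n true ++ List.replicate (Dfun g hunb n + 1) false

lemma count_Ffun (n : ℕ) : (Ffun g hunb n).count true = n := by
  simp [Ffun, List.count_append, List.count_replicate]

/-- the weight of a string. -/
def wfun (x : List Bool) : ℕ :=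
  if x = Ffun g hunb (x.count true) then x.count true else Encodable.encode x

lemma wfun_Ffun (n : ℕ) : wfun g hunb (Ffun g hunb n) = n := by
  simp [wfun, count_Ffun]

lemma Ffun_injective : Function.Injective (Ffun g hunb) := by
  intro m n h
  have := wfun_Ffun g hunb m
  rw [h, wfun_Ffun] at this
  exact this.symm

lemma wfun_cases (x : List Bool) (a : ℕ) (h : wfun g hunb x = a) :
    x = Ffun g hunb a ∨ Encodable.encode x = a := by
  unfold wfun at h
  split at h
  · left; rw [← h]; assumption
  · right; exact h

/-- the binary operation. -/
def sg (x y : List Bool) : List Bool :=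
  Ffun g hunb (wfun g hunb x + wfun g hunb y)

lemma sg_assoc (x y z : List Bool) :
    sg g hunb (sg g hunb x y) z = sg g hunb x (sg g hunb y z) := by
  simp [sg, wfun_Ffun, Nat.add_assoc]

lemma sg_comm (x y : List Bool) : sg g hunb x y = sg g hunb y x := by
  simp [sg, Nat.add_comm]

section comp

lemma computable_Dfun (hcomp : Computable g) : Computable (Dfun g hunb) := by
  have hc : Computable₂ (fun n L : ℕ => decide (4 * n + 3 < g L)) := by
    have h1 : Computable fun p : ℕ × ℕ => 4 * p.1 + 3 :=
      (Primrec.nat_add.comp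
        (Primrec.nat_mul.comp (Primrec.const 4) Primrec.fst) (Primrec.const 3)).to_comp
    have h2 : Computable fun p : ℕ × ℕ => g p.2 := hcomp.comp Computable.snd
    exact Primrec.nat_lt.decide.to_comp.comp h1 h2
  have hp : Partrec₂ (fun (n L : ℕ) => (Part.some (decide (4 * n + 3 < g L)) : Part Bool)) :=
    hc.partrec₂
  have hr := Partrec.rfind hp
  exact hr.of_eq fun n => by
    apply Part.eq_some_iff.2
    apply Nat.mem_rfind.2
    constructor
    · exact Part.mem_some_iff.2 (by simpa [Dfun] using Nat.find_spec (hunb (4 * n + 3)))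
    · intro m hm
      exact Part.mem_some_iff.2 (by simpa using Nat.find_min (hunb (4 * n + 3)) hm)

lemma primrec_replicate (b : Bool) : Primrec (fun n => List.replicate n b) := by
  have : Primrec fun n => (List.range n).map (fun _ => b) :=
    Primrec.list_map Primrec.list_range (Primrec₂.const b)
  exact this.of_eq fun n => by
    rw [show ((fun _ : ℕ => b) = Function.const ℕ b) from rfl, List.map_const,
      List.length_range]

lemma computable_Ffun (hcomp : Computable g) : Computable (Ffun g hunb) := by
  have h1 : Computable fun n => List.replicate n true := (primrec_replicate true).to_comp
  have h2 : Computable fun n : ℕ => List.replicate (Dfun g hunb n + 1) false :=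
    (primrec_replicate false).to_comp.comp
      ((Primrec.succ.to_comp).comp (computable_Dfun g hunb hcomp))
  exact Computable.list_append.comp h1 h2

lemma primrec_count : Primrec (fun x : List Bool => x.count true) := by
  have : Primrec fun x : List Bool =>
      x.foldr (fun b s => cond b (s + 1) s) 0 := by
    have hh : Primrec₂ fun (_ : List Bool) (p : Bool × ℕ) => cond p.1 (p.2 + 1) p.2 :=
      Primrec.cond (Primrec.fst.comp Primrec.snd)
        (Primrec.succ.comp (Primrec.snd.comp Primrec.snd))
        (Primrec.snd.comp Primrec.snd)
    exact Primrec.list_foldr Primrec.id (Primrec.const 0) hh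
  exact this.of_eq fun l => by
    induction l with
    | nil => rfl
    | cons a l ih => cases a <;> simp [List.count_cons, ih]

lemma computable_wfun (hcomp : Computable g) : Computable (wfun g hunb) := by
  have hcnt : Computable (fun x : List Bool => x.count true) := (primrec_count).to_comp
  have hFc : Computable fun x : List Bool => Ffun g hunb (x.count true) :=
    (computable_Ffun g hunb hcomp).comp hcnt
  have hc : Computable fun x : List Bool => decide (x = Ffun g hunb (x.count true)) :=
    (Primrec.eq (α := List Bool)).decide.to_comp.comp Computable.id hFc
  have := Computable.cond hc hcnt (Computable.encode (α := List Bool))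
  exact this.of_eq fun x => by
    simp only [wfun, Bool.cond_decide]

lemma computable_sg (hcomp : Computable g) : Computable₂ (sg g hunb) := by
  have hw := computable_wfun g hunb hcomp
  have : Computable fun p : List Bool × List Bool =>
      Ffun g hunb (wfun g hunb p.1 + wfun g hunb p.2) :=
    (computable_Ffun g hunb hcomp).comp
      (Primrec.nat_add.to_comp.comp (hw.comp Computable.fst) (hw.comp Computable.snd))
  exact this

end comp

/-- candidate set for the fiber of `wfun` over `a`. -/
def cand (a : ℕ) : Finset (List Bool) :=
  insert (Ffun g hunb a) (Encodable.decode (α := List Bool) a).toFinset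

lemma card_cand (a : ℕ) : (cand g hunb a).card ≤ 2 := by
  refine (Finset.card_insert_le _ _).trans ?_
  have : (Encodable.decode (α := List Bool) a).toFinset.card ≤ 1 := by
    cases Encodable.decode (α := List Bool) a <;> simp
  omega

lemma mem_cand (x : List Bool) (a : ℕ) (h : wfun g hunb x = a) : x ∈ cand g hunb a := by
  rcases wfun_cases g hunb x a h with h' | h'
  · rw [h']; exact Finset.mem_insert_self _ _
  · refine Finset.mem_insert_of_mem ?_
    rw [Option.mem_toFinset, ← h', Encodable.encodek]
    rfl

end Stmt3Aux

/-- For every nondecreasing, unbounded, total, computable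
g : ℕ → ℕ, there is a g(n)-to-one, total, commutative, associative, computable
function σ : Σ* × Σ* → Σ*. -/
theorem stmt_3 (g : ℕ → ℕ) (hmono : Monotone g)
    (hunb : ∀ N : ℕ, ∃ n : ℕ, g n > N) (hcomp : Computable g) :
    ∃ σ : List Bool → List Bool → List Bool,
      Computable₂ σ ∧
      (∀ x y z : List Bool, σ (σ x y) z = σ x (σ y z)) ∧
      (∀ x y : List Bool, σ x y = σ y x) ∧
      (∀ y : List Bool, (∃ x₁ x₂ : List Bool, σ x₁ x₂ = y) →
        {p : List Bool × List Bool | σ p.1 p.2 = y}.Finite ∧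
        {p : List Bool × List Bool | σ p.1 p.2 = y}.ncard ≤ g y.length) := by
  classical
  refine ⟨Stmt3Aux.sg g hunb, Stmt3Aux.computable_sg g hunb hcomp,
    Stmt3Aux.sg_assoc g hunb, Stmt3Aux.sg_comm g hunb, ?_⟩
  rintro y ⟨x₁, x₂, rfl⟩
  set n := Stmt3Aux.wfun g hunb x₁ + Stmt3Aux.wfun g hunb x₂ with hn
  -- the preimage set
  have hset : {p : List Bool × List Bool | Stmt3Aux.sg g hunb p.1 p.2 = Stmt3Aux.sg g hunb x₁ x₂}
      = {p : List Bool × List Bool | Stmt3Aux.wfun g hunb p.1 + Stmt3Aux.wfun g hunb p.2 = n} := by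
    ext p
    simp only [Set.mem_setOf_eq, Stmt3Aux.sg]
    exact ⟨fun h => Stmt3Aux.Ffun_injective g hunb h, fun h => by rw [h]⟩
  set T : Finset (List Bool × List Bool) :=
    (Finset.range (n + 1)).biUnion
      (fun a => (Stmt3Aux.cand g hunb a) ×ˢ (Stmt3Aux.cand g hunb (n - a))) with hT
  have hsub : {p : List Bool × List Bool |
      Stmt3Aux.wfun g hunb p.1 + Stmt3Aux.wfun g hunb p.2 = n} ⊆ (T : Set (List Bool × List Bool)) := by
    intro p hp
    simp only [Set.mem_setOf_eq] at hp
    simp only [hT, Finset.coe_biUnion, Set.mem_iUnion, Finset.mem_coe, Finset.mem_range,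
      Finset.mem_product]
    refine ⟨Stmt3Aux.wfun g hunb p.1, by omega, ?_, ?_⟩
    · exact Stmt3Aux.mem_cand g hunb p.1 _ rfl
    · exact Stmt3Aux.mem_cand g hunb p.2 _ (by omega)
  have hTcard : T.card ≤ 4 * n + 4 := by
    refine (Finset.card_biUnion_le).trans ?_
    have h1 : ∀ a ∈ Finset.range (n + 1),
        ((Stmt3Aux.cand g hunb a) ×ˢ (Stmt3Aux.cand g hunb (n - a))).card ≤ 4 := by
      intro a _
      rw [Finset.card_product]
      exact Nat.mul_le_mul (Stmt3Aux.card_cand g hunb a) (Stmt3Aux.card_cand g hunb (n - a))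
    calc (Finset.range (n + 1)).sum
          (fun a => ((Stmt3Aux.cand g hunb a) ×ˢ (Stmt3Aux.cand g hunb (n - a))).card)
        ≤ (Finset.range (n + 1)).sum (fun _ => 4) := Finset.sum_le_sum h1
      _ = 4 * n + 4 := by simp [Finset.sum_const, Finset.card_range]; ring
  have hfin : {p : List Bool × List Bool |
      Stmt3Aux.sg g hunb p.1 p.2 = Stmt3Aux.sg g hunb x₁ x₂}.Finite := by
    rw [hset]; exact T.finite_toSet.subset hsub
  refine ⟨hfin, ?_⟩
  have hcard : {p : List Bool × List Bool |
      Stmt3Aux.sg g hunb p.1 p.2 = Stmt3Aux.sg g hunb x₁ x₂}.ncard ≤ 4 * n + 4 := by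
    rw [hset]
    calc {p : List Bool × List Bool |
          Stmt3Aux.wfun g hunb p.1 + Stmt3Aux.wfun g hunb p.2 = n}.ncard
        ≤ (T : Set (List Bool × List Bool)).ncard :=
          Set.ncard_le_ncard hsub T.finite_toSet
      _ = T.card := Set.ncard_coe_finset T
      _ ≤ 4 * n + 4 := hTcard
  refine hcard.trans ?_
  have hlen : (Stmt3Aux.sg g hunb x₁ x₂).length = n + (Stmt3Aux.Dfun g hunb n + 1) := by
    simp [Stmt3Aux.sg, Stmt3Aux.Ffun, ← hn]
  rw [hlen]
  calc 4 * n + 4 ≤ g (Stmt3Aux.Dfun g hunb n) := Stmt3Aux.Dfun_spec g hunb n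
    _ ≤ g (n + (Stmt3Aux.Dfun g hunb n + 1)) := hmono (by omega)
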